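/- Let Q₀ and Q₁ be probability distributions fully supported on a finite alphabet 𝒳. Then twice the Bhattacharyya distance equals the minimal total KL divergence to the pair: 2B(Q₀,Q₁) = min_{P ∈ 𝒫(𝒳)} [ D(P‖Q₀) + D(P‖Q₁) ], where the minimum is over all probability distributions P on 𝒳. -/

import Mathlib

open MeasureTheory Filter Finset Set Topology
open scoped ENNReal NNReal ENat

namespace AHT

noncomputable section

variable {X : Type*}

/-- A probability distribution on a finite alphabet. -/
def IsDist [Fintype X] (P : X → ℝ) : Prop :=
  (∀ x, 0 ≤ P x) ∧ ∑ x, P x = 1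

/-- Kullback–Leibler divergence. -/
def KL [Fintype X] (P Q : X → ℝ) : ℝ :=
  ∑ a, P a * Real.log (P a / Q a)

/-- Bhattacharyya distance. -/
def Bhat [Fintype X] (Q0 Q1 : X → ℝ) : ℝ :=
  -Real.log (∑ x, (Q0 x) ^ ((1 : ℝ) / 2) * (Q1 x) ^ ((1 : ℝ) / 2))

/-- Empirical distribution (type) of the first `n` samples. -/
def emp [Fintype X] [DecidableEq X] (n : ℕ) (ω : ℕ → X) (a : X) : ℝ :=
  (((Finset.range n).filter fun k => ω k = a).card : ℝ) / n

/-- Row-stochastic matrix (adversary channel). -/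
def RowStoch [Fintype X] (A : X → X → ℝ) : Prop :=
  (∀ x y, 0 ≤ A x y) ∧ ∀ x, ∑ y, A x y = 1

/-- Output distribution of channel `A` when the input distribution is `P`. -/
def push [Fintype X] (P : X → ℝ) (A : X → X → ℝ) (y : X) : ℝ :=
  ∑ x, P x * A x y

/-- `μ` is the law of an i.i.d. sequence with one-dimensional marginal `Q`. -/
def IsIID [Fintype X] [MeasurableSpace X] (μ : Measure (ℕ → X)) (Q : X → ℝ) : Prop :=
  IsProbabilityMeasure μ ∧
    ∀ (n : ℕ) (v : Fin n → X),
      μ {ω | ∀ k : Fin n, ω (k : ℕ) = v k} = ENNReal.ofReal (∏ k, Q (v k))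

/-- Admissible adversary channels for hypothesis distribution `Pi`. -/
def Adm [Fintype X] (d : (X → ℝ) → (X → ℝ) → ℝ) (Δ : ℝ) (Pi : X → ℝ) :
    Set (X → X → ℝ) :=
  {A | RowStoch A ∧ d Pi (push Pi A) ≤ Δ ∧ ∀ y, 0 < push Pi A y}

/-- The constant `C = Σ_{n ≥ 1} e^{-n^{1-ζ}}` with `ζ = 0.85`. -/
def Cζ : ℝ := ∑' n : ℕ, Real.exp (-((n : ℝ) + 1) ^ (0.15 : ℝ))

/-- The thresholds `γ_n` (with `K = |𝒳|`). -/
def gammaTh (K M : ℕ) (α : ℝ) (n : ℕ) : ℝ :=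
  Real.log (Cζ / α) / n + 1 / (n : ℝ) ^ (0.85 : ℝ) +
    ((K : ℝ) * Real.log ((n : ℝ) + 1) + Real.log ((M : ℝ) - 1)) / n

/-- The statistic `Z_i^{(n)}`. -/
def Zstat [Fintype X] [DecidableEq X] {M : ℕ} (P : Fin M → X → ℝ)
    (d : (X → ℝ) → (X → ℝ) → ℝ) (Δ : ℝ) (i : Fin M) (n : ℕ) (ω : ℕ → X) : ℝ :=
  sInf {r | ∃ j, j ≠ i ∧ ∃ A ∈ Adm d Δ (P j), r = KL (emp n ω) (push (P j) A)}

/-- The one-sided stopping times `T_i`. -/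
def Ti [Fintype X] [DecidableEq X] {M : ℕ} (P : Fin M → X → ℝ)
    (d : (X → ℝ) → (X → ℝ) → ℝ) (Δ α : ℝ) (i : Fin M) (ω : ℕ → X) : ℕ∞ :=
  sInf {t : ℕ∞ | ∃ n : ℕ, t = (n : ℕ∞) ∧ 1 ≤ n ∧
    gammaTh (Fintype.card X) M α n ≤ Zstat P d Δ i n ω}

/-- The stopping time `T*`. -/
def Tstar [Fintype X] [DecidableEq X] {M : ℕ} (P : Fin M → X → ℝ)
    (d : (X → ℝ) → (X → ℝ) → ℝ) (Δ α : ℝ) (ω : ℕ → X) : ℕ∞ :=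
  ⨅ i, Ti P d Δ α i ω

/-- Expected value of an `ℕ∞`-valued stopping time. -/
def ExpT [MeasurableSpace X] (μ : Measure (ℕ → X)) (T : (ℕ → X) → ℕ∞) : ℝ :=
  (∫⁻ ω, ((T ω : ℕ∞) : ℝ≥0∞) ∂μ).toReal

/-- Thresholds in the binary non-aware setting. -/
def gammaNA (K : ℕ) (α : ℝ) (n : ℕ) : ℝ :=
  Real.log (Cζ / α) / n + 1 / (n : ℝ) ^ (0.85 : ℝ) + (K : ℝ) * Real.log ((n : ℝ) + 1) / n

/-- Admissible common channels in the non-aware setting. -/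
def AdmNA [Fintype X] (d : (X → ℝ) → (X → ℝ) → ℝ) (Δ : ℝ) (P0 P1 : X → ℝ) :
    Set (X → X → ℝ) :=
  {A | RowStoch A ∧ max (d P0 (push P0 A)) (d P1 (push P1 A)) ≤ Δ ∧
    (∀ y, 0 < push P0 A y) ∧ ∀ y, 0 < push P1 A y}

/-- The statistic `S_n` in the non-aware setting. -/
def Sstat [Fintype X] [DecidableEq X] (P0 P1 : X → ℝ)
    (d : (X → ℝ) → (X → ℝ) → ℝ) (Δ : ℝ) (n : ℕ) (ω : ℕ → X) : ℝ :=
  sInf {r | ∃ A ∈ AdmNA d Δ P0 P1,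
    r = max (KL (emp n ω) (push P0 A)) (KL (emp n ω) (push P1 A))}

/-- Stopping time `τ*` of the non-aware test. -/
def tauNA [Fintype X] [DecidableEq X] (P0 P1 : X → ℝ)
    (d : (X → ℝ) → (X → ℝ) → ℝ) (Δ α : ℝ) (ω : ℕ → X) : ℕ∞ :=
  sInf {t : ℕ∞ | ∃ n : ℕ, t = (n : ℕ∞) ∧ 1 ≤ n ∧
    gammaNA (Fintype.card X) α n ≤ Sstat P0 P1 d Δ n ω}

/-- A sequential test: a stopping time together with an `F_T`-measurable decision,
expressed functionally (the stopping decision and the final decision depend only on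
the samples observed up to the stopping time). -/
structure SeqTest (X : Type*) (M : ℕ) where
  T : (ℕ → X) → ℕ∞
  dec : (ℕ → X) → Fin M
  adapted : ∀ ω ω' : ℕ → X, ∀ n : ℕ, T ω = (n : ℕ∞) →
    (∀ k < n, ω k = ω' k) → T ω' = (n : ℕ∞) ∧ dec ω' = dec ω

/-- Membership in the decision maker's strategy set `𝒮_D(α)`: all error
probabilities are at most `α` whatever admissible strategy the adversary uses,
and the expected stopping times are finite. -/
def InSD [Fintype X] [MeasurableSpace X] {M : ℕ} (P : Fin M → X → ℝ)
    (d : (X → ℝ) → (X → ℝ) → ℝ) (Δ α : ℝ) (Φ : SeqTest X M) : Prop :=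
  ∀ B : Fin M → X → X → ℝ, (∀ i, B i ∈ Adm d Δ (P i)) →
    ∀ ν : Fin M → Measure (ℕ → X), (∀ i, IsIID (ν i) (push (P i) (B i))) →
      ∀ i, ν i {ω | Φ.dec ω ≠ i} ≤ ENNReal.ofReal α ∧
        ∫⁻ ω, ((Φ.T ω : ℕ∞) : ℝ≥0∞) ∂(ν i) < ⊤


/-- Twice the Bhattacharyya distance is the minimum over all distributions P
of D(P||Q0) + D(P||Q1), for fully supported Q0, Q1. -/
theorem two_bhattacharyya_eq_min_kl_sum {X : Type*} [Fintype X]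
    (Q0 Q1 : X → ℝ) (h0 : IsDist Q0) (h1 : IsDist Q1)
    (hs0 : ∀ x, 0 < Q0 x) (hs1 : ∀ x, 0 < Q1 x) :
    IsLeast {r : ℝ | ∃ P : X → ℝ, IsDist P ∧ r = KL P Q0 + KL P Q1} (2 * Bhat Q0 Q1) := by
  classical
  have hne : Nonempty X := by
    rcases isEmpty_or_nonempty X with h | h
    · exfalso
      have := h0.2
      simp at this
    · exact h
  set s : X → ℝ := fun x => (Q0 x) ^ ((1 : ℝ)/2) * (Q1 x) ^ ((1 : ℝ)/2) with hsdef
  have hspos : ∀ x, 0 < s x := fun x =>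
    mul_pos (Real.rpow_pos_of_pos (hs0 x) _) (Real.rpow_pos_of_pos (hs1 x) _)
  have hss : ∀ x, s x * s x = Q0 x * Q1 x := by
    intro x
    simp only [hsdef]
    rw [mul_mul_mul_comm, ← Real.rpow_add (hs0 x), ← Real.rpow_add (hs1 x)]
    norm_num
  set Z : ℝ := ∑ x, s x with hZdef
  have hZpos : 0 < Z := Finset.sum_pos (fun x _ => hspos x) Finset.univ_nonempty
  have hBhat : Bhat Q0 Q1 = -Real.log Z := rfl
  constructor
  · -- membership: the normalized geometric mean attains the value
    refine ⟨fun x => s x / Z, ⟨fun x => le_of_lt (div_pos (hspos x) hZpos), ?_⟩, ?_⟩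
    · rw [← Finset.sum_div, ← hZdef, div_self hZpos.ne']
    · have hterm : ∀ a : X,
          Real.log (s a / Z / Q0 a) + Real.log (s a / Z / Q1 a) = -(2 * Real.log Z) := by
        intro a
        have h0a := (hs0 a); have h1a := (hs1 a); have hsa := hspos a
        have hpa : 0 < s a / Z := div_pos hsa hZpos
        rw [← Real.log_mul (by positivity) (by positivity)]
        have heq : s a / Z / Q0 a * (s a / Z / Q1 a) = 1 / (Z * Z) := by
          field_simp
          nlinarith [hss a]
        rw [heq, one_div, Real.log_inv, Real.log_mul hZpos.ne' hZpos.ne']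
        ring
      have : KL (fun x => s x / Z) Q0 + KL (fun x => s x / Z) Q1
          = ∑ a, (s a / Z) * (Real.log (s a / Z / Q0 a) + Real.log (s a / Z / Q1 a)) := by
        simp only [KL, mul_add, Finset.sum_add_distrib]
      rw [this]
      have : ∑ a, (s a / Z) * (Real.log (s a / Z / Q0 a) + Real.log (s a / Z / Q1 a))
          = ∑ a, (s a / Z) * (-(2 * Real.log Z)) := by
        refine Finset.sum_congr rfl fun a _ => by rw [hterm a]
      rw [this, ← Finset.sum_mul, ← Finset.sum_div, ← hZdef, div_self hZpos.ne',
        hBhat]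
      ring
  · -- lower bound
    rintro r ⟨P, ⟨hPnn, hPsum⟩, rfl⟩
    have hterm : ∀ a : X,
        2 * (P a - s a / Z) - 2 * Real.log Z * P a
          ≤ P a * Real.log (P a / Q0 a) + P a * Real.log (P a / Q1 a) := by
      intro a
      rcases eq_or_lt_of_le (hPnn a) with h | h
      · rw [← h]
        have : 0 < s a / Z := div_pos (hspos a) hZpos
        nlinarith
      · -- P a > 0
        have h0a := hs0 a; have h1a := hs1 a; have hsa := hspos a
        have hlog2 : Real.log (P a / Q0 a) + Real.log (P a / Q1 a)
            = 2 * Real.log (P a / s a) := by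
          rw [← Real.log_mul (by positivity) (by positivity)]
          have : P a / Q0 a * (P a / Q1 a) = (P a / s a) * (P a / s a) := by
            field_simp
            nlinarith [hss a]
          rw [this, Real.log_mul (by positivity) (by positivity)]
          ring
        have hkey : P a - s a / Z ≤ P a * Real.log (P a * Z / s a) := by
          have hx : 0 < s a / (P a * Z) := by positivity
          have := Real.log_le_sub_one_of_pos hx
          have hinv : Real.log (s a / (P a * Z)) = -Real.log (P a * Z / s a) := by
            rw [← Real.log_inv]
            congr 1
            field_simp
          rw [hinv] at this
          have h2 : -(P a * Real.log (P a * Z / s a)) ≤ P a * (s a / (P a * Z) - 1) := by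
            have := mul_le_mul_of_nonneg_left this (le_of_lt h)
            nlinarith
          have h3 : P a * (s a / (P a * Z)) = s a / Z := by
            field_simp
          nlinarith
        have hsplit : Real.log (P a * Z / s a) = Real.log (P a / s a) + Real.log Z := by
          rw [← Real.log_mul (by positivity) hZpos.ne']
          congr 1
          field_simp
        rw [hsplit] at hkey
        nlinarith
    have hsum := Finset.sum_le_sum (fun a (_ : a ∈ Finset.univ) => hterm a)
    have hL : ∑ a, (2 * (P a - s a / Z) - 2 * Real.log Z * P a) = -(2 * Real.log Z) := by
      simp only [Finset.sum_sub_distrib, mul_sub, Finset.sum_sub_distrib]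
      rw [← Finset.mul_sum, ← Finset.mul_sum, ← Finset.mul_sum, ← Finset.sum_div,
        ← hZdef, hPsum, div_self hZpos.ne']
      ring
    have hR : ∑ a, (P a * Real.log (P a / Q0 a) + P a * Real.log (P a / Q1 a))
        = KL P Q0 + KL P Q1 := by
      simp only [KL, Finset.sum_add_distrib]
    rw [hL, hR] at hsum
    rw [hBhat]
    linarith

end

end AHT
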